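/- Let Λ be a row-finite single-vertex k-graph without sources, and let F' = {X_i = ∪_{j=1}^{t_i} μ_{ij}Λ : 1 ≤ i ≤ l} be a foundation set in 𝒥(Λ). Set n := ⋁_{i,j} d(μ_{ij}). Then the set M = {μ_{ij}α : α ∈ Λ^{n - d(μ_{ij})}, 1 ≤ i ≤ l, 1 ≤ j ≤ t_i} equals Λ^n. -/
import Mathlib


/-- A single-vertex `k`-graph, viewed as a monoid `Λ` with a degree map
`d : Λ → ℕᵏ` satisfying the unique factorization property. -/
structure OneVertexKGraphStr (k : ℕ) (Λ : Type) [Monoid Λ] where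
  d : Λ → Fin k → ℕ
  d_one : d 1 = 0
  d_mul : ∀ μ ν, d (μ * ν) = d μ + d ν
  factor : ∀ (μ : Λ) (m n : Fin k → ℕ), d μ = m + n →
    ∃! p : Λ × Λ, μ = p.1 * p.2 ∧ d p.1 = m ∧ d p.2 = n


/-- The constructible right ideals `𝒥(S)` of a multiplication `mul` on `S`. -/
def Constructibles {S : Type} (mul : S → S → S) : Set (Set S) :=
  insert ∅
    {X | ∃ L : List (S × S),
      X = L.foldr (fun p Y => (mul p.1 ·) ⁻¹' ((mul p.2 ·) '' Y)) Set.univ}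

/-- A foundation set in `𝒥(S)`. -/
def IsFoundationSet {S : Type} (mul : S → S → S) (F : Set (Set S)) : Prop :=
  F.Finite ∧ F ⊆ Constructibles mul ∧
    ∀ Y ∈ Constructibles mul, Y ≠ ∅ → ∃ X ∈ F, (X ∩ Y).Nonempty

/-- Let `Λ` be a row-finite single-vertex `k`-graph without
sources, and let `F' = {Xᵢ = ∪ⱼ μᵢⱼΛ}` be a foundation set in `𝒥(Λ)`.  With
`n = ⋁ᵢⱼ d(μᵢⱼ)`, the set `M = {μᵢⱼα : d(α) = n - d(μᵢⱼ)}` equals `Λⁿ`. -/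
theorem foundation_sweep {k : ℕ} {Λ : Type} [Monoid Λ]
    (K : OneVertexKGraphStr k Λ)
    (hrf : ∀ n : Fin k → ℕ, {μ : Λ | K.d μ = n}.Finite)
    (hns : ∀ n : Fin k → ℕ, ∃ μ : Λ, K.d μ = n)
    {l : ℕ} {t : Fin l → ℕ} (μ : (i : Fin l) → Fin (t i) → Λ)
    (hF : IsFoundationSet (· * ·)
      (Set.range fun i => ⋃ j, {x | ∃ tμ, x = μ i j * tμ}))
    (n : Fin k → ℕ)
    (hn : n = Finset.univ.sup fun i : Fin l =>
      Finset.univ.sup fun j : Fin (t i) => K.d (μ i j)) :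
    {x : Λ | ∃ i j α, K.d α = n - K.d (μ i j) ∧ x = μ i j * α} =
      {x : Λ | K.d x = n} := by
  have hle : ∀ i j, K.d (μ i j) ≤ n := by
    intro i j
    rw [hn]
    exact le_trans (Finset.le_sup (f := fun j => K.d (μ i j)) (Finset.mem_univ j))
      (Finset.le_sup (f := fun i => Finset.univ.sup fun j => K.d (μ i j))
        (Finset.mem_univ i))
  ext x
  simp only [Set.mem_setOf_eq]
  constructor
  · rintro ⟨i, j, α, hα, rfl⟩
    rw [K.d_mul, hα, add_tsub_cancel_of_le (hle i j)]
  · intro hx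
    -- Y = xΛ is constructible and nonempty
    obtain ⟨X, hXF, z, hz1, hz2⟩ := hF.2.2 {y | ∃ s, y = x * s}
      (by
        right
        refine ⟨[(1, x)], ?_⟩
        ext y
        simp [one_mul, eq_comm])
      (by
        intro h
        have : x ∈ ({y : Λ | ∃ s, y = x * s} : Set Λ) := ⟨1, (mul_one x).symm⟩
        rw [h] at this
        exact this)
    obtain ⟨i, rfl⟩ := hXF
    simp only [Set.mem_iUnion, Set.mem_setOf_eq] at hz1
    obtain ⟨j, s, hzs⟩ := hz1
    obtain ⟨tt, hztt⟩ := hz2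
    -- factor x as p.1 * p.2 with d p.1 = d (μ i j)
    obtain ⟨p, ⟨hp1, hp2, hp3⟩, _⟩ := K.factor x (K.d (μ i j)) (n - K.d (μ i j))
      (by rw [hx, add_tsub_cancel_of_le (hle i j)])
    -- two factorizations of z with first degree d (μ i j)
    have hds : K.d s = (n - K.d (μ i j)) + K.d tt := by
      have h0 : K.d (μ i j) + K.d s = n + K.d tt := by
        rw [← K.d_mul, ← hzs, hztt, K.d_mul, hx]
      have h1 : n + K.d tt = K.d (μ i j) + ((n - K.d (μ i j)) + K.d tt) := by
        rw [← add_assoc, add_tsub_cancel_of_le (hle i j)]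
      exact add_left_cancel (h0.trans h1)
    obtain ⟨q, _, huniq⟩ := K.factor z (K.d (μ i j)) (K.d s)
      (by rw [hzs, K.d_mul])
    have e1 : (μ i j, s) = q := huniq _ ⟨hzs, rfl, rfl⟩
    have e2 : (p.1, p.2 * tt) = q := huniq _ ⟨by rw [hztt, hp1, mul_assoc], hp2,
      by rw [K.d_mul, hp3, hds]⟩
    have : p.1 = μ i j := by
      exact congrArg Prod.fst (e2.trans e1.symm)
    exact ⟨i, j, p.2, hp3, by rw [hp1, this]⟩
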